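/- Let X be a vector lattice with X~ separating points of X such that the canonical image of X is a regular sublattice of X~~. Then X has the b-property if and only if for every net x_α in X, x_α order converges to 0 in X whenever x̂_α order converges to 0 in X~~. -/

import Mathlib

set_option linter.unusedSectionVars false
set_option maxHeartbeats 1000000

open Filter Set

section ODual

variable (E : Type*) [AddCommGroup E] [Preorder E] [Module ℝ E]

/-- The order (bounded) dual: linear functionals bounded on order intervals. -/
noncomputable def obDual : Submodule ℝ (E →ₗ[ℝ] ℝ) where
  carrier := {f | ∀ w : E, ∃ M : ℝ, ∀ x : E, -w ≤ x → x ≤ w → |f x| ≤ M}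
  zero_mem' := fun w => ⟨0, fun x _ _ => by simp⟩
  add_mem' := fun {f g} hf hg w => by
    obtain ⟨M, hM⟩ := hf w
    obtain ⟨N, hN⟩ := hg w
    refine ⟨M + N, fun x h1 h2 => ?_⟩
    calc |(f + g) x| = |f x + g x| := by simp
    _ ≤ |f x| + |g x| := abs_add_le _ _
    _ ≤ M + N := add_le_add (hM x h1 h2) (hN x h1 h2)
  smul_mem' := fun c f hf => by
    intro w
    obtain ⟨M, hM⟩ := hf w
    refine ⟨|c| * M, fun x h1 h2 => ?_⟩
    calc |(c • f) x| = |c| * |f x| := by simp [abs_mul]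
    _ ≤ |c| * M := mul_le_mul_of_nonneg_left (hM x h1 h2) (abs_nonneg c)

/-- The pointwise-on-positive-elements (pre)order on a space of functionals. -/
instance instSubPre (Y : Submodule ℝ (E →ₗ[ℝ] ℝ)) : Preorder Y where
  le f g := ∀ x : E, 0 ≤ x → (f : E →ₗ[ℝ] ℝ) x ≤ (g : E →ₗ[ℝ] ℝ) x
  le_refl f x _ := le_rfl
  le_trans f g h h1 h2 x hx := (h1 x hx).trans (h2 x hx)

variable {E}

theorem subPre_le_iff {Y : Submodule ℝ (E →ₗ[ℝ] ℝ)} {f g : Y} :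
    f ≤ g ↔ ∀ x : E, 0 ≤ x → (f : E →ₗ[ℝ] ℝ) x ≤ (g : E →ₗ[ℝ] ℝ) x := Iff.rfl

/-- Order convergence of a net to a limit (sandwich form: eventually
`l - d ≤ x_α ≤ l + d` for every `d` in a set directed downward to `0`). -/
def OConvTo {ι : Type*} [Preorder ι] (x : ι → E) (l : E) : Prop :=
  ∃ D : Set E, D.Nonempty ∧ DirectedOn (· ≥ ·) D ∧ IsGLB D 0 ∧
    ∀ d ∈ D, ∃ α₀ : ι, ∀ α, α₀ ≤ α → l - d ≤ x α ∧ x α ≤ l + d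

/-- Order continuity of a linear functional: `f(x_α) → 0` whenever `x_α ↓ 0`. -/
def OrdContE (f : E →ₗ[ℝ] ℝ) : Prop :=
  ∀ D : Set E, D.Nonempty → DirectedOn (· ≥ ·) D → IsGLB D 0 →
    ∀ ε : ℝ, 0 < ε → ∃ d ∈ D, ∀ e ∈ D, e ≤ d → |f e| < ε

end ODual

section VL

variable (X : Type*) [Lattice X] [AddCommGroup X]
  [CovariantClass X X (· + ·) (· ≤ ·)] [Module ℝ X] [PosSMulMono ℝ X]

variable {X} in
/-- Unbounded order convergence: `|x_α - l| ⊓ u →o 0` for every `u ≥ 0`. -/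
def uoConvTo {ι : Type*} [Preorder ι] (x : ι → X) (l : X) : Prop :=
  ∀ u : X, 0 ≤ u → OConvTo (fun α => |x α - l| ⊓ u) (0 : X)

/-- The canonical evaluation of `x ∈ X` on a space `Y` of functionals on `X`. -/
def hatFun (Y : Submodule ℝ (X →ₗ[ℝ] ℝ)) (x : X) : Y →ₗ[ℝ] ℝ where
  toFun f := (f : X →ₗ[ℝ] ℝ) x
  map_add' f g := by simp
  map_smul' c f := by simp

theorem hatFun_mem (Y : Submodule ℝ (X →ₗ[ℝ] ℝ)) (x : X) :
    hatFun X Y x ∈ obDual Y := by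
  intro w
  refine ⟨(w : X →ₗ[ℝ] ℝ) (x⁺) + (w : X →ₗ[ℝ] ℝ) (x⁻), fun f h1 h2 => ?_⟩
  have hp : (0 : X) ≤ x⁺ := posPart_nonneg x
  have hn : (0 : X) ≤ x⁻ := negPart_nonneg x
  have e1 := (subPre_le_iff.mp h1) _ hp
  have e2 := (subPre_le_iff.mp h2) _ hp
  have e3 := (subPre_le_iff.mp h1) _ hn
  have e4 := (subPre_le_iff.mp h2) _ hn
  have c1 : -((w : X →ₗ[ℝ] ℝ) (x⁺)) ≤ (f : X →ₗ[ℝ] ℝ) (x⁺) := by simpa using e1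
  have c3 : -((w : X →ₗ[ℝ] ℝ) (x⁻)) ≤ (f : X →ₗ[ℝ] ℝ) (x⁻) := by simpa using e3
  have key : (f : X →ₗ[ℝ] ℝ) x
      = (f : X →ₗ[ℝ] ℝ) (x⁺) - (f : X →ₗ[ℝ] ℝ) (x⁻) := by
    rw [← map_sub, posPart_sub_negPart]
  show |(f : X →ₗ[ℝ] ℝ) x| ≤ _
  rw [key]
  have a1 : |(f : X →ₗ[ℝ] ℝ) (x⁺)| ≤ (w : X →ₗ[ℝ] ℝ) (x⁺) := abs_le.mpr ⟨c1, e2⟩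
  have a2 : |(f : X →ₗ[ℝ] ℝ) (x⁻)| ≤ (w : X →ₗ[ℝ] ℝ) (x⁻) := abs_le.mpr ⟨c3, e4⟩
  have := abs_sub ((f : X →ₗ[ℝ] ℝ) (x⁺)) ((f : X →ₗ[ℝ] ℝ) (x⁻))
  linarith

/-- The canonical embedding of `X` into the order dual of `Y ⊆ X~`. -/
def hatEl (Y : Submodule ℝ (X →ₗ[ℝ] ℝ)) (x : X) : obDual Y :=
  ⟨hatFun X Y x, hatFun_mem X Y x⟩

/-- The order of `X~~` (instance search no longer finds `instSubPre` here). -/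
noncomputable instance instSubPreBidual : Preorder (obDual (obDual X)) :=
  instSubPre (obDual X) (obDual (obDual X))

/-- `X~` separates the points of `X`. -/
def SepPoints : Prop := ∀ x : X, x ≠ 0 → ∃ f : obDual X, (f : X →ₗ[ℝ] ℝ) x ≠ 0

/-- The canonical image of `X` in `X~~` is a regular sublattice:
`x_α ↓ 0` in `X` implies `x̂_α ↓ 0` in `X~~`. -/
def HatRegular : Prop :=
  ∀ D : Set X, D.Nonempty → DirectedOn (· ≥ ·) D → IsGLB D 0 →
    IsGLB (hatEl X (obDual X) '' D) (0 : obDual ↥(obDual X))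

variable {X} in
/-- The net `x̂_α` is eventually order bounded in `X~~`. -/
def HatEvOB {ι : Type*} [Preorder ι] (x : ι → X) : Prop :=
  ∃ (b t : obDual ↥(obDual X)) (α₀ : ι), ∀ α, α₀ ≤ α →
    b ≤ hatEl X (obDual X) (x α) ∧ hatEl X (obDual X) (x α) ≤ t

variable {X} in
/-- Bidual bounded uo-convergence. -/
def bbuoConvTo {ι : Type*} [Preorder ι] (x : ι → X) (l : X) : Prop :=
  uoConvTo x l ∧ HatEvOB x

/-- `X` has the `b`-property: every subset of `X` whose canonical image is
order bounded in `X~~` is order bounded in `X`. -/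
def HasBProp : Prop :=
  ∀ A : Set X,
    (∃ b t : obDual ↥(obDual X), ∀ a ∈ A,
        b ≤ hatEl X (obDual X) a ∧ hatEl X (obDual X) a ≤ t) →
    ∃ b t : X, ∀ a ∈ A, b ≤ a ∧ a ≤ t

/-- The Archimedean property for a lattice-ordered group. -/
def IsArch : Prop := ∀ x y : X, 0 ≤ x → (∀ n : ℕ, n • x ≤ y) → x = 0

end VL



section Helpers

variable {E : Type*} [AddCommGroup E] [Preorder E] [Module ℝ E]

theorem subPre_nonneg_iff {Y : Submodule ℝ (E →ₗ[ℝ] ℝ)} {f : Y} :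
    0 ≤ f ↔ ∀ x : E, 0 ≤ x → 0 ≤ (f : E →ₗ[ℝ] ℝ) x := by
  rw [subPre_le_iff]
  simp

theorem subPre_sub_nonneg {Y : Submodule ℝ (E →ₗ[ℝ] ℝ)} {f g : Y} (h : f ≤ g) :
    0 ≤ g - f := by
  rw [subPre_nonneg_iff]
  intro x hx
  have := subPre_le_iff.mp h x hx
  simp only [AddSubgroupClass.coe_sub, LinearMap.sub_apply]
  linarith

theorem subPre_neg_le_iff {Y : Submodule ℝ (E →ₗ[ℝ] ℝ)} {f g : Y} :
    -f ≤ g ↔ ∀ x : E, 0 ≤ x → -((f : E →ₗ[ℝ] ℝ) x) ≤ (g : E →ₗ[ℝ] ℝ) x := by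
  rw [subPre_le_iff]
  simp

end Helpers

section LatHelpers

variable {X : Type*} [Lattice X] [AddCommGroup X]
  [CovariantClass X X (· + ·) (· ≤ ·)] [Module ℝ X] [PosSMulMono ℝ X]

theorem my_neg_le_neg' {X : Type*} [AddCommGroup X] [Preorder X]
    [CovariantClass X X (· + ·) (· ≤ ·)] {a b : X} (h : a ≤ b) : -b ≤ -a := by
  have h1 := add_le_add_right h (-a + -b)
  have h2 : -a + -b + a = -b := by abel
  have h3 : -a + -b + b = -a := by abel
  rwa [h2, h3] at h1

theorem my_abs_le_iff {a b : X} : |a| ≤ b ↔ a ≤ b ∧ -a ≤ b := by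
  rw [abs]
  exact sup_le_iff

theorem smul_sup_of_pos {c : ℝ} (hc : 0 < c) (a b : X) :
    c • (a ⊔ b) = c • a ⊔ c • b := by
  apply le_antisymm
  · have h1 : a ⊔ b ≤ c⁻¹ • (c • a ⊔ c • b) := by
      apply sup_le
      · have := smul_le_smul_of_nonneg_left (le_sup_left : c • a ≤ c • a ⊔ c • b)
          (le_of_lt (inv_pos.mpr hc))
        rwa [inv_smul_smul₀ hc.ne'] at this
      · have := smul_le_smul_of_nonneg_left (le_sup_right : c • b ≤ c • a ⊔ c • b)
          (le_of_lt (inv_pos.mpr hc))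
        rwa [inv_smul_smul₀ hc.ne'] at this
    have := smul_le_smul_of_nonneg_left h1 hc.le
    rwa [smul_inv_smul₀ hc.ne'] at this
  · exact sup_le (smul_le_smul_of_nonneg_left le_sup_left hc.le)
      (smul_le_smul_of_nonneg_left le_sup_right hc.le)

theorem posPart_smul_of_nonneg {c : ℝ} (hc : 0 ≤ c) (a : X) :
    (c • a)⁺ = c • a⁺ := by
  rcases eq_or_lt_of_le hc with h | h
  · subst h; simp [posPart_def]
  · rw [posPart_def, posPart_def, smul_sup_of_pos h, smul_zero]

theorem negPart_smul_of_nonneg {c : ℝ} (hc : 0 ≤ c) (a : X) :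
    (c • a)⁻ = c • a⁻ := by
  have h1 := posPart_smul_of_nonneg hc (-a)
  calc (c • a)⁻ = (-(c • a))⁺ := by rw [posPart_def, negPart_def]
  _ = (c • (-a))⁺ := by rw [smul_neg]
  _ = c • (-a)⁺ := h1
  _ = c • a⁻ := by rw [posPart_def, negPart_def]

theorem my_posPart_add_le (a b : X) : (a + b)⁺ ≤ a⁺ + b⁺ := by
  rw [posPart_def]
  apply sup_le
  · exact add_le_add (le_sup_left.trans_eq (posPart_def a).symm)
      (le_sup_left.trans_eq (posPart_def b).symm)
  · exact add_nonneg (posPart_nonneg a) (posPart_nonneg b)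

/-- `(z - s)⁺ + s = z ⊔ s` -/
theorem posPart_sub_add (z s : X) : (z - s)⁺ + s = z ⊔ s := by
  rw [posPart_def, sup_add, zero_add, sub_add_cancel]

/-- `z - z ⊓ s = (z - s)⁺` -/
theorem sub_inf_eq_posPart (z s : X) : z - z ⊓ s = (z - s)⁺ := by
  have h := inf_add_sup z s
  have h2 := posPart_sub_add z s
  have h3 : (z - s)⁺ = z ⊔ s - s := by rw [← h2]; abel
  rw [h3, sub_eq_sub_iff_add_eq_add]
  rw [← h]; abel

theorem obDual_pos_apply {f : obDual X} (hf : 0 ≤ f) {x : X} (hx : 0 ≤ x) :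
    0 ≤ (f : X →ₗ[ℝ] ℝ) x := subPre_nonneg_iff.mp hf x hx

theorem obDual_mono {f : obDual X} (hf : 0 ≤ f) {a b : X} (h : a ≤ b) :
    (f : X →ₗ[ℝ] ℝ) a ≤ (f : X →ₗ[ℝ] ℝ) b := by
  have := obDual_pos_apply hf (sub_nonneg.mpr h)
  rw [map_sub] at this
  linarith

end LatHelpers

section LemA

variable {X : Type*} [Lattice X] [AddCommGroup X]
  [CovariantClass X X (· + ·) (· ≤ ·)] [Module ℝ X] [PosSMulMono ℝ X]

theorem my_posPart_of_nonneg {a : X} (ha : 0 ≤ a) : a⁺ = a := by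
  rw [posPart_def, sup_eq_left.mpr ha]

theorem my_negPart_of_nonneg {a : X} (ha : 0 ≤ a) : a⁻ = 0 := by
  rw [negPart_def, sup_eq_right.mpr (neg_nonpos.mpr ha)]

theorem posPart_neg' (a : X) : (-a)⁺ = a⁻ := by rw [posPart_def, negPart_def]

theorem my_posPart_le_abs (a : X) : a⁺ ≤ |a| := by
  rw [posPart_def]
  exact sup_le (le_abs_self a) (abs_nonneg a)

theorem my_negPart_le_abs (a : X) : a⁻ ≤ |a| := by
  rw [← posPart_neg', ← abs_neg]
  exact my_posPart_le_abs (-a)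

/-- Lemma A : for a positive order-bounded functional `h` and `w : X`, there is
`h' ∈ [0, h]` with `h' w = h w⁺`. -/
theorem lemmaA (h : obDual X) (hpos : 0 ≤ h) (w : X) :
    ∃ h' : obDual X, 0 ≤ h' ∧ h' ≤ h ∧
      (h' : X →ₗ[ℝ] ℝ) w = (h : X →ₗ[ℝ] ℝ) (w⁺) := by
  classical
  set hf : X →ₗ[ℝ] ℝ := (h : X →ₗ[ℝ] ℝ) with hhf
  have hposA : ∀ x : X, 0 ≤ x → 0 ≤ hf x := fun x hx => obDual_pos_apply hpos hx
  have hmono : ∀ {a b : X}, a ≤ b → hf a ≤ hf b := fun hab => obDual_mono hpos hab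
  set N : X → ℝ := fun y => hf (y⁺) with hN
  have N_hom : ∀ c : ℝ, 0 < c → ∀ y : X, N (c • y) = c * N y := by
    intro c hc y
    simp only [hN, posPart_smul_of_nonneg hc.le, map_smul, smul_eq_mul]
  have N_add : ∀ y z : X, N (y + z) ≤ N y + N z := by
    intro y z
    have := hmono (my_posPart_add_le y z)
    rwa [map_add] at this
  have Hsing : ∀ c : ℝ, c • w = 0 → c • (hf (w⁺)) = 0 := by
    intro c hc
    rcases smul_eq_zero.mp hc with h0 | h0
    · simp [h0]
    · simp [h0]
  set pm := LinearPMap.mkSpanSingleton' (R := ℝ) (σ := RingHom.id ℝ) w (hf (w⁺)) Hsing with hpm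
  have hdom : ∀ v : pm.domain, pm v ≤ N v.1 := by
    rintro ⟨v, hv⟩
    obtain ⟨c, hc⟩ := Submodule.mem_span_singleton.mp hv
    subst hc
    rw [LinearPMap.mkSpanSingleton'_apply]
    rcases lt_trichotomy c 0 with hlt | heq | hgt
    · have h1 : c • hf (w⁺) ≤ 0 := by
        have := hposA _ (posPart_nonneg w)
        exact smul_nonpos_of_nonpos_of_nonneg hlt.le this
      have h2 : (0:ℝ) ≤ N (c • w) := hposA _ (posPart_nonneg _)
      exact h1.trans h2
    · subst heq; simp [hN]
    · rw [N_hom c hgt]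
      simp [hN]
  obtain ⟨g, hg_eq, hg_le⟩ := exists_extension_of_le_sublinear pm N N_hom N_add hdom
  have hg_posPart : ∀ y : X, g y ≤ hf (y⁺) := hg_le
  have hg_negPart : ∀ y : X, -(g y) ≤ hf (y⁻) := by
    intro y
    have := hg_le (-y)
    rw [map_neg] at this
    simp only [hN] at this
    rwa [posPart_neg'] at this
  have hg_nonneg : ∀ y : X, 0 ≤ y → 0 ≤ g y := by
    intro y hy
    have := hg_negPart y
    rw [my_negPart_of_nonneg hy, map_zero] at this
    linarith
  have hg_le_h : ∀ y : X, 0 ≤ y → g y ≤ hf y := by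
    intro y hy
    have := hg_posPart y
    rwa [my_posPart_of_nonneg hy] at this
  have hg_mem : g ∈ obDual X := by
    intro u
    refine ⟨|hf u|, fun y hy1 hy2 => ?_⟩
    have habs : |y| ≤ u := my_abs_le_iff.mpr ⟨hy2, neg_le.mp hy1⟩
    have h1 : g y ≤ hf (y⁺) := hg_posPart y
    have h2 : -(g y) ≤ hf (y⁻) := hg_negPart y
    have h3 : hf (y⁺) ≤ hf u := hmono ((my_posPart_le_abs y).trans habs)
    have h4 : hf (y⁻) ≤ hf u := hmono ((my_negPart_le_abs y).trans habs)
    have h5 : hf u ≤ |hf u| := le_abs_self _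
    rw [abs_le]
    constructor <;> linarith
  refine ⟨⟨g, hg_mem⟩, ?_, ?_, ?_⟩
  · exact subPre_nonneg_iff.mpr hg_nonneg
  · exact subPre_le_iff.mpr hg_le_h
  · have := hg_eq ⟨w, Submodule.mem_span_singleton_self w⟩
    have := this.trans (LinearPMap.mkSpanSingleton'_apply_self _ _ _ _)
    exact this

end LemA

section RK

variable {X : Type*} [Lattice X] [AddCommGroup X]
  [CovariantClass X X (· + ·) (· ≤ ·)] [Module ℝ X] [PosSMulMono ℝ X]

/-- Riesz–Kantorovich: every order-bounded functional is dominated (on the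
positive cone) by a positive order-bounded functional. -/
theorem rkPos (f : obDual X) : ∃ p : obDual X, 0 ≤ p ∧
    ∀ x : X, 0 ≤ x → (f : X →ₗ[ℝ] ℝ) x ≤ (p : X →ₗ[ℝ] ℝ) x := by
  classical
  set ff : X →ₗ[ℝ] ℝ := (f : X →ₗ[ℝ] ℝ) with hff
  set S : X → Set ℝ := fun w => (fun u => ff u) '' {u | 0 ≤ u ∧ u ≤ w} with hS
  set F : X → ℝ := fun w => sSup (S w) with hF
  have hmemS : ∀ {w u : X}, 0 ≤ u → u ≤ w → ff u ∈ S w := by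
    intro w u h1 h2; exact ⟨u, ⟨h1, h2⟩, rfl⟩
  have hne : ∀ {w : X}, 0 ≤ w → (S w).Nonempty := by
    intro w hw; exact ⟨ff 0, hmemS le_rfl hw⟩
  have hbdd : ∀ w : X, BddAbove (S w) := by
    intro w
    obtain ⟨M, hM⟩ := f.2 w
    refine ⟨M, ?_⟩
    rintro r ⟨u, ⟨hu0, huw⟩, rfl⟩
    have hw0 : (0:X) ≤ w := hu0.trans huw
    have h0 : -w ≤ u := le_trans (neg_nonpos.mpr hw0) hu0
    exact (le_abs_self _).trans (hM u h0 huw)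
  have hFmono : ∀ {a b : X}, 0 ≤ a → a ≤ b → F a ≤ F b := by
    intro a b ha hab
    apply csSup_le (hne ha)
    rintro r ⟨u, ⟨h1, h2⟩, rfl⟩
    dsimp only
    exact le_csSup (hbdd b) (hmemS h1 (h2.trans hab))
  have hFnonneg : ∀ {w : X}, 0 ≤ w → 0 ≤ F w := by
    intro w hw
    have : ff 0 ≤ F w := le_csSup (hbdd w) (hmemS le_rfl hw)
    simpa using this
  have hFge : ∀ {w : X}, 0 ≤ w → ff w ≤ F w := by
    intro w hw; exact le_csSup (hbdd w) (hmemS hw le_rfl)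
  have hFzero : F 0 = 0 := by
    have h1 : F 0 ≤ 0 := by
      apply csSup_le (hne le_rfl)
      rintro r ⟨u, ⟨h1, h2⟩, rfl⟩
      dsimp only
      rw [le_antisymm h2 h1]
      simp
    exact le_antisymm h1 (hFnonneg le_rfl)
  have hFadd : ∀ {a b : X}, 0 ≤ a → 0 ≤ b → F (a + b) = F a + F b := by
    intro a b ha hb
    apply le_antisymm
    · apply csSup_le (hne (add_nonneg ha hb))
      rintro r ⟨u, ⟨h1, h2⟩, rfl⟩
      dsimp only
      have hu1 : 0 ≤ u ⊓ a := le_inf h1 ha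
      have hu2 : 0 ≤ u - u ⊓ a := by
        rw [sub_nonneg]; exact inf_le_left
      have hu2b : u - u ⊓ a ≤ b := by
        rw [sub_inf_eq_posPart, posPart_def]
        exact sup_le (by rwa [sub_le_iff_le_add, add_comm]) hb
      have heq : ff u = ff (u ⊓ a) + ff (u - u ⊓ a) := by
        rw [← map_add]; congr 1; abel
      rw [heq]
      exact add_le_add (le_csSup (hbdd a) (hmemS hu1 inf_le_right))
        (le_csSup (hbdd b) (hmemS hu2 hu2b))
    · rw [← sub_nonneg]
      have step : ∀ r ∈ S b, F a + r ≤ F (a + b) := by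
        rintro r ⟨u2, ⟨h1, h2⟩, rfl⟩
        dsimp only
        rw [← le_sub_iff_add_le]
        apply csSup_le (hne ha)
        rintro r' ⟨u1, ⟨h1', h2'⟩, rfl⟩
        dsimp only
        rw [le_sub_iff_add_le, ← map_add]
        exact le_csSup (hbdd _) (hmemS (add_nonneg h1' h1) (add_le_add h2' h2))
      have hFb : F b ≤ F (a + b) - F a := by
        apply csSup_le (hne hb)
        intro r hr
        have := step r hr
        linarith
      linarith [hFb]
  have hFsmul : ∀ {c : ℝ}, 0 < c → ∀ {w : X}, 0 ≤ w → F (c • w) = c * F w := by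
    intro c hc w hw
    apply le_antisymm
    · apply csSup_le (hne (smul_nonneg hc.le hw))
      rintro r ⟨u, ⟨h1, h2⟩, rfl⟩
      dsimp only
      have hu1 : 0 ≤ c⁻¹ • u := smul_nonneg (inv_pos.mpr hc).le h1
      have hu2 : c⁻¹ • u ≤ w := by
        have := smul_le_smul_of_nonneg_left h2 (inv_pos.mpr hc).le
        rwa [inv_smul_smul₀ hc.ne'] at this
      have heq : ff u = c * ff (c⁻¹ • u) := by
        rw [← smul_eq_mul, ← map_smul, smul_inv_smul₀ hc.ne']
      rw [heq]
      exact mul_le_mul_of_nonneg_left (le_csSup (hbdd w) (hmemS hu1 hu2)) hc.le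
    · have step : F w ≤ c⁻¹ * F (c • w) := by
        apply csSup_le (hne hw)
        rintro r ⟨u, ⟨h1, h2⟩, rfl⟩
        dsimp only
        have hmem : ff (c • u) ∈ S (c • w) :=
          hmemS (smul_nonneg hc.le h1) (smul_le_smul_of_nonneg_left h2 hc.le)
        have h3 : c * ff u ≤ F (c • w) := by
          rw [← smul_eq_mul, ← map_smul]
          exact le_csSup (hbdd _) hmem
        have := mul_le_mul_of_nonneg_left h3 (inv_pos.mpr hc).le
        rwa [← mul_assoc, inv_mul_cancel₀ hc.ne', one_mul] at this
      have := mul_le_mul_of_nonneg_left step hc.le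
      rwa [← mul_assoc, mul_inv_cancel₀ hc.ne', one_mul] at this
  -- the candidate map
  set p0 : X → ℝ := fun x => F (x⁺) - F (x⁻) with hp0
  have hFD : ∀ (a b x : X), 0 ≤ a → 0 ≤ b → x = a - b → p0 x = F a - F b := by
    intro a b x ha hb hx
    have h1 : x⁺ - x⁻ = a - b := by rw [posPart_sub_negPart, hx]
    have h2 : x⁺ + b = a + x⁻ := by
      rw [sub_eq_sub_iff_add_eq_add] at h1
      linear_combination (norm := abel) h1
    have h3 : F (x⁺) + F b = F a + F (x⁻) := by
      rw [← hFadd (posPart_nonneg x) hb, ← hFadd ha (negPart_nonneg x), h2]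
    simp only [hp0]
    linarith
  have hadd : ∀ x y : X, p0 (x + y) = p0 x + p0 y := by
    intro x y
    have h1 : p0 (x + y) = F (x⁺ + y⁺) - F (x⁻ + y⁻) := by
      apply hFD _ _ _ (add_nonneg (posPart_nonneg x) (posPart_nonneg y))
        (add_nonneg (negPart_nonneg x) (negPart_nonneg y))
      have hx := posPart_sub_negPart x
      have hy := posPart_sub_negPart y
      linear_combination (norm := abel) - hx - hy
    rw [h1, hFadd (posPart_nonneg x) (posPart_nonneg y),
      hFadd (negPart_nonneg x) (negPart_nonneg y)]
    simp only [hp0]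
    ring
  have hneg : ∀ x : X, p0 (-x) = - p0 x := by
    intro x
    have e1 : (-x)⁺ = x⁻ := posPart_neg' x
    have e2 : (-x)⁻ = x⁺ := by rw [← posPart_neg' (-x), neg_neg]
    simp only [hp0]
    rw [e1, e2]
    ring
  have hsmul : ∀ (c : ℝ) (x : X), p0 (c • x) = c * p0 x := by
    have hnn : ∀ (c : ℝ), 0 ≤ c → ∀ (x : X), p0 (c • x) = c * p0 x := by
      intro c hc x
      rcases eq_or_lt_of_le hc with h | h
      · subst h; simp only [hp0, zero_smul]
        rw [my_posPart_of_nonneg le_rfl, my_negPart_of_nonneg le_rfl, hFzero]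
        ring
      · simp only [hp0, posPart_smul_of_nonneg h.le, negPart_smul_of_nonneg h.le,
          hFsmul h (posPart_nonneg x), hFsmul h (negPart_nonneg x)]
        ring
    intro c x
    rcases le_or_gt 0 c with hc | hc
    · exact hnn c hc x
    · have h1 : c • x = (-c) • (-x) := by rw [smul_neg, neg_smul, neg_neg]
      rw [h1, hnn (-c) (by linarith) (-x), hneg]
      ring
  set p : X →ₗ[ℝ] ℝ :=
    { toFun := p0
      map_add' := hadd
      map_smul' := fun c x => by
        simp only [RingHom.id_apply, smul_eq_mul]
        exact hsmul c x } with hp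
  have hp_mem : p ∈ obDual X := by
    intro w
    refine ⟨|F (w⁺)|, fun y hy1 hy2 => ?_⟩
    have habs : |y| ≤ w⁺ := by
      refine (my_abs_le_iff.mpr ⟨hy2, neg_le.mp hy1⟩).trans ?_
      rw [posPart_def]; exact le_sup_left
    have h1 : F (y⁺) ≤ F (w⁺) := hFmono (posPart_nonneg y) ((my_posPart_le_abs y).trans habs)
    have h2 : F (y⁻) ≤ F (w⁺) := hFmono (negPart_nonneg y) ((my_negPart_le_abs y).trans habs)
    have h3 : 0 ≤ F (y⁺) := hFnonneg (posPart_nonneg y)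
    have h4 : 0 ≤ F (y⁻) := hFnonneg (negPart_nonneg y)
    have h5 : F (w⁺) ≤ |F (w⁺)| := le_abs_self _
    have : p y = F (y⁺) - F (y⁻) := rfl
    rw [this, abs_le]
    constructor <;> linarith
  refine ⟨⟨p, hp_mem⟩, ?_, ?_⟩
  · rw [subPre_nonneg_iff]
    intro x hx
    have : (p : X → ℝ) x = F (x⁺) - F (x⁻) := rfl
    have h3 : 0 ≤ F (x⁺) := hFnonneg (posPart_nonneg x)
    rw [my_negPart_of_nonneg hx, hFzero] at this
    simp only [LinearMap.coe_mk] at *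
    rw [show ((⟨p, hp_mem⟩ : obDual X) : X →ₗ[ℝ] ℝ) x = p x from rfl, this]
    linarith
  · intro x hx
    have : (p : X → ℝ) x = F (x⁺) - F (x⁻) := rfl
    rw [my_negPart_of_nonneg hx, my_posPart_of_nonneg hx, hFzero] at this
    rw [show ((⟨p, hp_mem⟩ : obDual X) : X →ₗ[ℝ] ℝ) x = p x from rfl, this]
    have := hFge hx
    linarith
end RK

section Level2

variable {X : Type*} [Lattice X] [AddCommGroup X]
  [CovariantClass X X (· + ·) (· ≤ ·)] [Module ℝ X] [PosSMulMono ℝ X]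

theorem l2_pos_apply {d : obDual ↥(obDual X)} (hd : 0 ≤ d) {h : obDual X} (hh : 0 ≤ h) :
    0 ≤ (d : ↥(obDual X) →ₗ[ℝ] ℝ) h := subPre_nonneg_iff.mp hd h hh

theorem l2_mono {d : obDual ↥(obDual X)} (hd : 0 ≤ d) {h h' : obDual X} (hh : h ≤ h') :
    (d : ↥(obDual X) →ₗ[ℝ] ℝ) h ≤ (d : ↥(obDual X) →ₗ[ℝ] ℝ) h' := by
  have h0 : 0 ≤ h' - h := subPre_sub_nonneg hh
  have := l2_pos_apply hd h0
  rw [show (d : ↥(obDual X) →ₗ[ℝ] ℝ) (h' - h)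
      = (d : ↥(obDual X) →ₗ[ℝ] ℝ) h' - (d : ↥(obDual X) →ₗ[ℝ] ℝ) h from map_sub _ h' h] at this
  linarith

/-- From the two-sided sandwich `|h y| ≤ d h` (for positive `h`) deduce the
bound `h |y| ≤ 2 d h` for positive `h`. -/
theorem abs_apply_le {d : obDual ↥(obDual X)} (hd : 0 ≤ d) {y : X}
    (hy : ∀ h : obDual X, 0 ≤ h → |(h : X →ₗ[ℝ] ℝ) y| ≤ (d : ↥(obDual X) →ₗ[ℝ] ℝ) h) :
    ∀ h : obDual X, 0 ≤ h →
      (h : X →ₗ[ℝ] ℝ) |y| ≤ 2 * (d : ↥(obDual X) →ₗ[ℝ] ℝ) h := by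
  intro h hpos
  obtain ⟨h₁, h₁0, h₁h, h₁y⟩ := lemmaA h hpos y
  obtain ⟨h₂, h₂0, h₂h, h₂y⟩ := lemmaA h hpos (-y)
  rw [posPart_neg'] at h₂y
  have e0 : (h₂ : X →ₗ[ℝ] ℝ) y = -((h : X →ₗ[ℝ] ℝ) (y⁻)) := by
    have hm := map_neg (h₂ : X →ₗ[ℝ] ℝ) y
    rw [h₂y] at hm
    linarith
  have key : (h : X →ₗ[ℝ] ℝ) |y| = (h₁ : X →ₗ[ℝ] ℝ) y - (h₂ : X →ₗ[ℝ] ℝ) y := by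
    rw [← posPart_add_negPart y, map_add, ← h₁y, e0]
    ring
  rw [key]
  have b1 := abs_le.mp (hy h₁ h₁0)
  have b2 := abs_le.mp (hy h₂ h₂0)
  linarith [l2_mono hd h₁h, l2_mono hd h₂h, b1.1, b1.2, b2.1, b2.2]

end Level2

section SBnd

variable {X : Type*} [Lattice X] [AddCommGroup X]
  [CovariantClass X X (· + ·) (· ≤ ·)] [Module ℝ X] [PosSMulMono ℝ X]
  {κ : Type*}

/-- finite lattice-sup of the moduli `|x α|`, `α ∈ F` (with junk value `0`). -/
def sBnd (x : κ → X) (F : Finset κ) : X := F.fold (· ⊔ ·) 0 (fun α => |x α|)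

theorem sBnd_le_iff {x : κ → X} {F : Finset κ} {u : X} :
    sBnd x F ≤ u ↔ 0 ≤ u ∧ ∀ α ∈ F, |x α| ≤ u := by
  induction F using Finset.cons_induction_on with
  | empty => simp [sBnd]
  | cons _ _ hmem ih =>
    rw [sBnd, Finset.fold_cons, sup_le_iff]
    rw [sBnd] at ih
    rw [ih]
    constructor
    · rintro ⟨ha, h0, hall⟩
      exact ⟨h0, by simp only [Finset.mem_cons]; rintro α (rfl | hα); exacts [ha, hall α hα]⟩
    · rintro ⟨h0, hall⟩
      exact ⟨hall _ (Finset.mem_cons_self ..), h0,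
        fun α hα => hall α (Finset.mem_cons_of_mem hα)⟩

theorem sBnd_nonneg (x : κ → X) (F : Finset κ) : 0 ≤ sBnd x F := by
  induction F using Finset.cons_induction_on with
  | empty => simp [sBnd]
  | cons _ _ hmem ih =>
    rw [sBnd, Finset.fold_cons]
    rw [sBnd] at ih
    exact ih.trans le_sup_right

theorem le_sBnd {x : κ → X} {F : Finset κ} {α : κ} (hα : α ∈ F) : |x α| ≤ sBnd x F :=
  (sBnd_le_iff.mp le_rfl).2 α hα

theorem sBnd_mono {x : κ → X} {F G : Finset κ} (h : F ⊆ G) : sBnd x F ≤ sBnd x G :=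
  sBnd_le_iff.mpr ⟨sBnd_nonneg x G, fun α hα => le_sBnd (h hα)⟩

theorem sBnd_apply_le {x : κ → X} {d : obDual ↥(obDual X)} (hd : 0 ≤ d) {F : Finset κ}
    (hF : ∀ α ∈ F, ∀ h : obDual X, 0 ≤ h →
      |(h : X →ₗ[ℝ] ℝ) (x α)| ≤ (d : ↥(obDual X) →ₗ[ℝ] ℝ) h) :
    ∀ h : obDual X, 0 ≤ h →
      (h : X →ₗ[ℝ] ℝ) (sBnd x F) ≤ 2 * (d : ↥(obDual X) →ₗ[ℝ] ℝ) h := by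
  induction F using Finset.cons_induction_on with
  | empty =>
    intro h hpos
    have : (0:ℝ) ≤ (d : ↥(obDual X) →ₗ[ℝ] ℝ) h := l2_pos_apply hd hpos
    simp only [sBnd, Finset.fold_empty, map_zero]
    linarith
  | @cons a F hmem ih =>
    intro h hpos
    have hFa : ∀ α ∈ F, ∀ h : obDual X, 0 ≤ h →
        |(h : X →ₗ[ℝ] ℝ) (x α)| ≤ (d : ↥(obDual X) →ₗ[ℝ] ℝ) h :=
      fun α hα => hF α (Finset.mem_cons_of_mem hα)
    have hxa := hF a (Finset.mem_cons_self ..)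
    obtain ⟨h', h'0, h'h, h'w⟩ := lemmaA h hpos (sBnd x F - |x a|)
    have hsplit : (h : X →ₗ[ℝ] ℝ) (sBnd x (Finset.cons a F hmem))
        = (h : X →ₗ[ℝ] ℝ) |x a| - (h' : X →ₗ[ℝ] ℝ) |x a| + (h' : X →ₗ[ℝ] ℝ) (sBnd x F) := by
      have e1 : sBnd x (Finset.cons a F hmem) = |x a| ⊔ sBnd x F := by
        rw [sBnd, Finset.fold_cons]; rfl
      have e2 : |x a| ⊔ sBnd x F = |x a| + (sBnd x F - |x a|)⁺ := by
        rw [sup_comm, ← posPart_sub_add (sBnd x F) |x a|,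
          add_comm ((sBnd x F - |x a|)⁺) (|x a|)]
      rw [e1, e2, map_add, ← h'w, map_sub]
      ring
    have hsub0 : 0 ≤ h - h' := subPre_sub_nonneg h'h
    have b1 : (h : X →ₗ[ℝ] ℝ) |x a| - (h' : X →ₗ[ℝ] ℝ) |x a|
        ≤ 2 * (d : ↥(obDual X) →ₗ[ℝ] ℝ) (h - h') := by
      have := abs_apply_le hd hxa (h - h') hsub0
      simpa [AddSubgroupClass.coe_sub, LinearMap.sub_apply] using this
    have b2 := ih hFa h' h'0
    have e3 : (d : ↥(obDual X) →ₗ[ℝ] ℝ) (h - h')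
        = (d : ↥(obDual X) →ₗ[ℝ] ℝ) h - (d : ↥(obDual X) →ₗ[ℝ] ℝ) h' := map_sub _ h h'
    rw [hsplit]
    rw [e3] at b1
    linarith

end SBnd

section LimFun

variable {X : Type*} [Lattice X] [AddCommGroup X]
  [CovariantClass X X (· + ·) (· ≤ ·)] [Module ℝ X] [PosSMulMono ℝ X]

/-- An ultrafilter limit of a net with values in an order interval `[0, z]`
defines an order-bounded functional on `X~`. -/
theorem limFunctional {ι : Type*} (𝒰 : Ultrafilter ι) (v : ι → X) (z : X) (hz : 0 ≤ z)
    (hv : ∀ i, 0 ≤ v i ∧ v i ≤ z) :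
    ∃ c : obDual ↥(obDual X), ∀ h : obDual X,
      Filter.Tendsto (fun i => (h : X →ₗ[ℝ] ℝ) (v i)) (𝒰 : Filter ι)
        (nhds ((c : ↥(obDual X) →ₗ[ℝ] ℝ) h)) := by
  classical
  have hex : ∀ h : obDual X, ∃ L : ℝ,
      Filter.Tendsto (fun i => (h : X →ₗ[ℝ] ℝ) (v i)) (𝒰 : Filter ι) (nhds L) := by
    intro h
    obtain ⟨M, hM⟩ := h.2 z
    have hMi : ∀ i, (h : X →ₗ[ℝ] ℝ) (v i) ∈ Set.Icc (-M) M := by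
      intro i
      have := hM (v i) (le_trans (neg_nonpos.mpr hz) (hv i).1) (hv i).2
      exact abs_le.mp this
    have hle : ↑(𝒰.map (fun i => (h : X →ₗ[ℝ] ℝ) (v i)))
        ≤ Filter.principal (Set.Icc (-M) M) := by
      rw [Filter.le_principal_iff]
      exact Filter.mem_map.mpr (Filter.univ_mem' hMi)
    obtain ⟨L, _, hL⟩ := (isCompact_Icc (a := -M) (b := M)).ultrafilter_le_nhds
      (𝒰.map _) hle
    refine ⟨L, ?_⟩
    rwa [Filter.Tendsto, ← Ultrafilter.coe_map]
  choose Lf hLf using hex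
  have hadd : ∀ h g : obDual X, Lf (h + g) = Lf h + Lf g := by
    intro h g
    have h1 : Filter.Tendsto (fun i => (h : X →ₗ[ℝ] ℝ) (v i) + (g : X →ₗ[ℝ] ℝ) (v i))
        (𝒰 : Filter ι) (nhds (Lf h + Lf g)) := (hLf h).add (hLf g)
    have h2 := hLf (h + g)
    have he : (fun i => ((h + g : obDual X) : X →ₗ[ℝ] ℝ) (v i))
        = fun i => (h : X →ₗ[ℝ] ℝ) (v i) + (g : X →ₗ[ℝ] ℝ) (v i) := by
      funext i
      simp [Submodule.coe_add]
    rw [he] at h2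
    exact tendsto_nhds_unique h2 h1
  have hsmul : ∀ (a : ℝ) (h : obDual X), Lf (a • h) = a * Lf h := by
    intro a h
    have h1 : Filter.Tendsto (fun i => a * (h : X →ₗ[ℝ] ℝ) (v i))
        (𝒰 : Filter ι) (nhds (a * Lf h)) := (hLf h).const_mul a
    have h2 := hLf (a • h)
    have he : (fun i => ((a • h : obDual X) : X →ₗ[ℝ] ℝ) (v i))
        = fun i => a * (h : X →ₗ[ℝ] ℝ) (v i) := by
      funext i
      simp [Submodule.coe_smul]
    rw [he] at h2
    exact tendsto_nhds_unique h2 h1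
  set c0 : ↥(obDual X) →ₗ[ℝ] ℝ :=
    { toFun := Lf
      map_add' := hadd
      map_smul' := fun a h => by
        simp only [RingHom.id_apply, smul_eq_mul]
        exact hsmul a h } with hc0
  have hmem : c0 ∈ obDual ↥(obDual X) := by
    intro W
    refine ⟨|(W : X →ₗ[ℝ] ℝ) z|, fun h h1 h2 => ?_⟩
    have hW0 : (0 : obDual X) ≤ W := by
      rw [subPre_nonneg_iff]
      intro y hy
      have a1 := subPre_le_iff.mp h2 y hy
      have a2 := subPre_le_iff.mp h1 y hy
      simp only [NegMemClass.coe_neg, LinearMap.neg_apply] at a2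
      linarith
    have hbd : ∀ i, |(h : X →ₗ[ℝ] ℝ) (v i)| ≤ |(W : X →ₗ[ℝ] ℝ) z| := by
      intro i
      have a1 := subPre_le_iff.mp h2 (v i) (hv i).1
      have a2 := subPre_le_iff.mp h1 (v i) (hv i).1
      simp only [NegMemClass.coe_neg, LinearMap.neg_apply] at a2
      have a3 : (W : X →ₗ[ℝ] ℝ) (v i) ≤ (W : X →ₗ[ℝ] ℝ) z := obDual_mono hW0 (hv i).2
      have a4 : (W : X →ₗ[ℝ] ℝ) z ≤ |(W : X →ₗ[ℝ] ℝ) z| := le_abs_self _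
      rw [abs_le]
      constructor <;> linarith
    have habs : Filter.Tendsto (fun i => |(h : X →ₗ[ℝ] ℝ) (v i)|) (𝒰 : Filter ι)
        (nhds |Lf h|) := (hLf h).abs
    have : c0 h = Lf h := rfl
    rw [this]
    have := le_of_tendsto habs (Filter.Eventually.of_forall hbd)
    exact this
  exact ⟨⟨c0, hmem⟩, hLf⟩

end LimFun

section MainAux

variable {X : Type*} [Lattice X] [AddCommGroup X]
  [CovariantClass X X (· + ·) (· ≤ ·)] [Module ℝ X] [PosSMulMono ℝ X]

theorem hatEl_apply (y : X) (h : obDual X) :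
    ((hatEl X (obDual X) y : obDual ↥(obDual X)) : ↥(obDual X) →ₗ[ℝ] ℝ) h
      = (h : X →ₗ[ℝ] ℝ) y := rfl

theorem bid_zero_sub (e : obDual ↥(obDual X)) : 0 - e = -e := zero_sub e

theorem bid_zero_add (e : obDual ↥(obDual X)) : 0 + e = e := zero_add e

theorem my_posPart_mono {a b : X} (h : a ≤ b) : a⁺ ≤ b⁺ := by
  rw [posPart_def, posPart_def]
  exact sup_le_sup_right h 0

end MainAux

/-- For a regular Riesz dual system `⟨X, X~⟩`: `X` has the `b`-property iff the
order convergence in `X` agrees with the order convergence of canonical images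
in `X~~`. -/
theorem statement14 {X : Type u} [Lattice X] [AddCommGroup X]
    [CovariantClass X X (· + ·) (· ≤ ·)] [Module ℝ X] [PosSMulMono ℝ X]
    (harch : IsArch X)
    (hsep : SepPoints X) (hreg : HatRegular X) :
    HasBProp X ↔
      ∀ (κ : Type u) [Preorder κ] [Nonempty κ] [IsDirected κ (· ≤ ·)]
        (x : κ → X),
        OConvTo (fun α => hatEl X (obDual X) (x α)) 0 → OConvTo x 0 := by
  constructor
  · intro hb κ _ _ _ x hconv
    classical
    obtain ⟨D, ⟨d₁, hd₁⟩, hDdir, hDglb, hDs⟩ := hconv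
    have hDpos : ∀ d ∈ D, (0 : obDual ↥(obDual X)) ≤ d := fun d hd => hDglb.1 hd
    -- pointwise form of the sandwich
    have hsand : ∀ d ∈ D, ∃ α₀ : κ, ∀ α, α₀ ≤ α → ∀ h : obDual X, 0 ≤ h →
        |(h : X →ₗ[ℝ] ℝ) (x α)| ≤ (d : ↥(obDual X) →ₗ[ℝ] ℝ) h := by
      intro d hd
      obtain ⟨α₀, hα₀⟩ := hDs d hd
      refine ⟨α₀, fun α hα h hh => ?_⟩
      obtain ⟨hl, hr⟩ := hα₀ α hα
      rw [bid_zero_sub] at hl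
      rw [bid_zero_add] at hr
      have hr' := subPre_le_iff.mp hr h hh
      have hl' := subPre_neg_le_iff.mp hl h hh
      rw [hatEl_apply] at hr' hl'
      exact abs_le.mpr ⟨neg_le.mp (by linarith), hr'⟩
    -- from the b-property : tails are order bounded
    have hmkbound : ∀ (d : obDual ↥(obDual X)) (α₁ : κ),
        (∀ α, α₁ ≤ α → ∀ h : obDual X, 0 ≤ h →
          |(h : X →ₗ[ℝ] ℝ) (x α)| ≤ (d : ↥(obDual X) →ₗ[ℝ] ℝ) h) →
        ∃ u : X, 0 ≤ u ∧ ∀ α, α₁ ≤ α → |x α| ≤ u := by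
      intro d α₁ htail
      have hbnd : ∃ bb tt : obDual ↥(obDual X), ∀ a ∈ x '' {α | α₁ ≤ α},
          bb ≤ hatEl X (obDual X) a ∧ hatEl X (obDual X) a ≤ tt := by
        refine ⟨-d, d, ?_⟩
        rintro _ ⟨α, hα, rfl⟩
        constructor
        · refine subPre_neg_le_iff.mpr ?_
          intro h hh
          rw [hatEl_apply]
          have := abs_le.mp (htail α hα h hh)
          linarith [this.1]
        · refine subPre_le_iff.mpr ?_
          intro h hh
          rw [hatEl_apply]
          exact (abs_le.mp (htail α hα h hh)).2
      obtain ⟨bb, tt, hbt⟩ := hb (x '' {α | α₁ ≤ α}) hbnd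
      refine ⟨tt ⊔ -bb ⊔ 0, le_sup_right, fun α hα => ?_⟩
      obtain ⟨h1, h2⟩ := hbt (x α) ⟨α, hα, rfl⟩
      rw [my_abs_le_iff]
      constructor
      · exact h2.trans (le_trans le_sup_left le_sup_left)
      · exact (my_neg_le_neg' h1).trans (le_trans le_sup_right le_sup_left)
    -- the set of eventual bounds
    set D' : Set X := {u | 0 ≤ u ∧ ∃ α₀ : κ, ∀ α, α₀ ≤ α → |x α| ≤ u} with hD'
    -- nonempty
    have hD'ne : D'.Nonempty := by
      obtain ⟨α₁, htail⟩ := hsand d₁ hd₁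
      obtain ⟨u, hu0, hu⟩ := hmkbound d₁ α₁ htail
      exact ⟨u, hu0, α₁, hu⟩
    -- directed downward
    have hD'dir : DirectedOn (· ≥ ·) D' := by
      rintro u ⟨hu0, αu, hαu⟩ v ⟨hv0, αv, hαv⟩
      obtain ⟨αw, h1, h2⟩ := directed_of (· ≤ ·) αu αv
      refine ⟨u ⊓ v, ⟨le_inf hu0 hv0, αw, fun α hα => le_inf (hαu α (h1.trans hα))
        (hαv α (h2.trans hα))⟩, inf_le_left, inf_le_right⟩
    -- the crucial GLB property
    have hD'glb : IsGLB D' 0 := by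
      constructor
      · intro u hu
        exact hu.1
      · intro v hv
        -- show v ≤ 0 i.e. z := v⁺ = 0
        set z : X := v⁺ with hzdef
        have hz0 : 0 ≤ z := posPart_nonneg v
        have hzle : ∀ u ∈ D', z ≤ u := by
          intro u hu
          rw [hzdef, posPart_def]
          exact sup_le (hv hu) hu.1
        -- key estimate
        have hKEY : ∀ h : obDual X, 0 ≤ h → ∀ d ∈ D,
            (h : X →ₗ[ℝ] ℝ) z ≤ 2 * (d : ↥(obDual X) →ₗ[ℝ] ℝ) h := by
          intro h hh d hd
          have hd0 : (0 : obDual ↥(obDual X)) ≤ d := hDpos d hd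
          obtain ⟨α₀, htail⟩ := hsand d hd
          obtain ⟨u₁, hu₁0, hu₁⟩ := hmkbound d α₀ htail
          -- the decreasing family (z - sup of moduli over finite tail subsets)⁺
          set κ' := {α : κ // α₀ ≤ α} with hκ'
          set x' : κ' → X := fun a => x a.1 with hx'
          set vv : Finset κ' → X := fun F => (z - sBnd x' F)⁺ with hvv
          have hvv_mono : ∀ {F G : Finset κ'}, F ⊆ G → vv G ≤ vv F := by
            intro F G hFG
            exact my_posPart_mono (sub_le_sub_left (sBnd_mono hFG) z)
          have hvv_le_z : ∀ F, vv F ≤ z := by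
            intro F
            have h1 : z - sBnd x' F ≤ z := sub_le_self z (sBnd_nonneg x' F)
            have := my_posPart_mono h1
            rwa [my_posPart_of_nonneg hz0] at this
          have hvv_empty : vv ∅ = z := by
            simp only [hvv, sBnd, Finset.fold_empty, sub_zero]
            exact my_posPart_of_nonneg hz0
          set Z : Set X := Set.range vv with hZ
          have hZne : Z.Nonempty := ⟨vv ∅, ⟨∅, rfl⟩⟩
          have hZdir : DirectedOn (· ≥ ·) Z := by
            rintro _ ⟨F, rfl⟩ _ ⟨G, rfl⟩
            exact ⟨vv (F ∪ G), ⟨F ∪ G, rfl⟩, hvv_mono Finset.subset_union_left,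
              hvv_mono Finset.subset_union_right⟩
          have hZglb : IsGLB Z 0 := by
            constructor
            · rintro _ ⟨F, rfl⟩
              exact posPart_nonneg _
            · intro W₀ hW₀
              set W : X := W₀⁺ with hWdef
              have hW0 : 0 ≤ W := posPart_nonneg W₀
              have hWv : ∀ F : Finset κ', W ≤ vv F := by
                intro F
                rw [hWdef, posPart_def]
                exact sup_le (hW₀ ⟨F, rfl⟩) (posPart_nonneg _)
              have hWz : W ≤ z := (hWv ∅).trans_eq hvv_empty
              have hWsing : ∀ α : κ, ∀ hα : α₀ ≤ α, W + |x α| ≤ z ⊔ |x α| := by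
                intro α hα
                have h2 : sBnd x' {(⟨α, hα⟩ : κ')} = |x α| := by
                  simp only [sBnd, Finset.fold_singleton]
                  exact sup_eq_left.mpr (abs_nonneg (x α))
                have h1 : W ≤ (z - sBnd x' {(⟨α, hα⟩ : κ')})⁺ := hWv {⟨α, hα⟩}
                rw [h2] at h1
                calc W + |x α| ≤ (z - |x α|)⁺ + |x α| := add_le_add_left h1 _
                _ = z ⊔ |x α| := posPart_sub_add z |x α|
              have hind : ∀ n : ℕ, ∀ α, α₀ ≤ α → n • W + |x α| ≤ u₁ := by
                intro n
                induction n with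
                | zero => intro α hα; simpa using hu₁ α hα
                | succ n ih =>
                  have humem : u₁ - n • W ∈ D' := by
                    refine ⟨?_, α₀, fun α hα => ?_⟩
                    · have h3 := ih α₀ le_rfl
                      have h2 : (0:X) ≤ |x α₀| := abs_nonneg _
                      have h4 : |x α₀| ≤ u₁ - n • W := by
                        rw [le_sub_iff_add_le, add_comm]
                        exact h3
                      exact h2.trans h4
                    · have h3 := ih α hα
                      rw [le_sub_iff_add_le, add_comm]
                      exact h3
                  have hzu : z ≤ u₁ - n • W := hzle _ humem
                  intro α hα
                  have h3 : z ⊔ |x α| ≤ u₁ - n • W := sup_le hzu (by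
                    have := ih α hα
                    rw [le_sub_iff_add_le, add_comm]
                    exact this)
                  have h4 := hWsing α hα
                  calc (n + 1) • W + |x α| = n • W + (W + |x α|) := by
                        rw [succ_nsmul]; abel
                  _ ≤ n • W + (z ⊔ |x α|) := add_le_add_right h4 _
                  _ ≤ n • W + (u₁ - n • W) := add_le_add_right h3 _
                  _ = u₁ := by abel
              have hWn : ∀ n : ℕ, n • W ≤ u₁ := by
                intro n
                have := hind n α₀ le_rfl
                have h2 : (0:X) ≤ |x α₀| := abs_nonneg _
                calc n • W = n • W + 0 := by rw [add_zero]
                _ ≤ n • W + |x α₀| := add_le_add_right h2 _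
                _ ≤ u₁ := this
              have hWzero : W = 0 := harch W u₁ hW0 hWn
              have : W₀ ≤ W := by rw [hWdef, posPart_def]; exact le_sup_left
              rw [hWzero] at this
              exact this
          -- regularity : the hat image has infimum 0 as well
          have hZhat := hreg Z hZne hZdir hZglb
          -- an ultrafilter limit functional along the finite subsets
          haveI : Nonempty (Finset κ') := ⟨∅⟩
          haveI hNB : (Filter.atTop : Filter (Finset κ')).NeBot := Filter.atTop_neBot
          set 𝒰 : Ultrafilter (Finset κ') := Ultrafilter.of Filter.atTop with h𝒰def
          have h𝒰le : (𝒰 : Filter (Finset κ')) ≤ Filter.atTop := Ultrafilter.of_le _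
          obtain ⟨c, hc⟩ := limFunctional 𝒰 vv z hz0 (fun F => ⟨posPart_nonneg _, hvv_le_z F⟩)
          have hclb : c ∈ lowerBounds (hatEl X (obDual X) '' Z) := by
            rintro _ ⟨_, ⟨F, rfl⟩, rfl⟩
            refine subPre_le_iff.mpr ?_
            intro g hg
            rw [hatEl_apply]
            have hev : ∀ᶠ G in (𝒰 : Filter (Finset κ')),
                (g : X →ₗ[ℝ] ℝ) (vv G) ≤ (g : X →ₗ[ℝ] ℝ) (vv F) := by
              apply h𝒰le
              exact Filter.mem_of_superset (Filter.Ici_mem_atTop F)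
                (fun G hG => obDual_mono hg (hvv_mono hG))
            exact le_of_tendsto (hc g) hev
          have hc0 : c ≤ 0 := hZhat.2 hclb
          have hch : (c : ↥(obDual X) →ₗ[ℝ] ℝ) h ≤ 0 := by
            have := subPre_le_iff.mp hc0 h hh
            simpa using this
          -- conclude : h z ≤ 2 d h + ε for every ε > 0
          have hfin : ∀ ε : ℝ, 0 < ε →
              (h : X →ₗ[ℝ] ℝ) z ≤ 2 * (d : ↥(obDual X) →ₗ[ℝ] ℝ) h + ε := by
            intro ε hε
            have hev := Filter.Tendsto.eventually_lt_const (lt_of_le_of_lt hch hε) (hc h)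
            obtain ⟨F, hF⟩ := hev.exists
            have hdec : (h : X →ₗ[ℝ] ℝ) z
                = (h : X →ₗ[ℝ] ℝ) (z ⊓ sBnd x' F) + (h : X →ₗ[ℝ] ℝ) (vv F) := by
              have e := sub_inf_eq_posPart z (sBnd x' F)
              have : (h : X →ₗ[ℝ] ℝ) (z - z ⊓ sBnd x' F) = (h : X →ₗ[ℝ] ℝ) (vv F) := by
                rw [e]
              rw [map_sub] at this
              linarith
            have h1 : (h : X →ₗ[ℝ] ℝ) (z ⊓ sBnd x' F) ≤ (h : X →ₗ[ℝ] ℝ) (sBnd x' F) :=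
              obDual_mono hh inf_le_right
            have h2 : (h : X →ₗ[ℝ] ℝ) (sBnd x' F) ≤ 2 * (d : ↥(obDual X) →ₗ[ℝ] ℝ) h := by
              apply sBnd_apply_le hd0 (fun a _ g hg => htail a.1 a.2 g hg) h hh
            rw [hdec]
            linarith
          have := le_of_forall_pos_le_add hfin
          linarith [this]
        -- conclude : h z = 0 for all positive h
        have hz_nonpos : ∀ h : obDual X, 0 ≤ h → (h : X →ₗ[ℝ] ℝ) z ≤ 0 := by
          intro h hh
          set chalf : obDual ↥(obDual X) := (1/2 : ℝ) • hatEl X (obDual X) z with hchalf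
          have hlb : chalf ∈ lowerBounds D := by
            intro d hd
            refine subPre_le_iff.mpr ?_
            intro g hg
            have := hKEY g hg d hd
            have e : (chalf : ↥(obDual X) →ₗ[ℝ] ℝ) g = (1/2 : ℝ) * (g : X →ₗ[ℝ] ℝ) z := by
              simp only [hchalf, SetLike.val_smul, LinearMap.smul_apply, smul_eq_mul,
                hatEl_apply]
            rw [e]
            linarith
          have hc2 := hDglb.2 hlb
          have := subPre_le_iff.mp hc2 h hh
          simp only [hchalf, SetLike.val_smul, LinearMap.smul_apply, smul_eq_mul,
            hatEl_apply, ZeroMemClass.coe_zero, LinearMap.zero_apply] at this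
          linarith
        have hz_eq : ∀ h : obDual X, 0 ≤ h → (h : X →ₗ[ℝ] ℝ) z = 0 := by
          intro h hh
          exact le_antisymm (hz_nonpos h hh) (obDual_pos_apply hh hz0)
        have hall : ∀ f : obDual X, (f : X →ₗ[ℝ] ℝ) z = 0 := by
          intro f
          obtain ⟨p, hp0, hpf⟩ := rkPos f
          have hdiffpos : (0 : obDual X) ≤ p - f := by
            rw [subPre_nonneg_iff]
            intro y hy
            have := hpf y hy
            simp only [AddSubgroupClass.coe_sub, LinearMap.sub_apply]
            linarith
          have e1 := hz_eq p hp0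
          have e2 := hz_eq (p - f) hdiffpos
          simp only [AddSubgroupClass.coe_sub, LinearMap.sub_apply] at e2
          linarith
        have hzz : z = 0 := by
          by_contra hne
          obtain ⟨f, hf⟩ := hsep z hne
          exact hf (hall f)
        have : v ≤ v⁺ := by rw [posPart_def]; exact le_sup_left
        rw [← hzdef, hzz] at this
        exact this
    -- assemble the order convergence
    refine ⟨D', hD'ne, hD'dir, hD'glb, ?_⟩
    intro u hu
    obtain ⟨hu0, α₀, hα₀⟩ := hu
    refine ⟨α₀, fun α hα => ?_⟩
    have := my_abs_le_iff.mp (hα₀ α hα)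
    constructor
    · rw [zero_sub]
      exact neg_le.mp this.2
    · rw [zero_add]
      exact this.1
  · -- reverse : convergence criterion implies the b-property
    intro hconv A hA
    obtain ⟨b, t, hbt⟩ := hA
    rcases A.eq_empty_or_nonempty with rfl | ⟨a₀, ha₀⟩
    · exact ⟨0, 0, by simp⟩
    classical
    -- the index type
    letI pre : Preorder (↥A × ℕ) := Preorder.lift (fun p => p.2)
    haveI hne : Nonempty (↥A × ℕ) := ⟨(⟨a₀, ha₀⟩, 0)⟩
    have hdir : IsDirected (↥A × ℕ) (fun p q => @LE.le (↥A × ℕ) (@Preorder.toLE _ pre) p q) := by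
      constructor
      rintro p q
      refine ⟨(p.1, max p.2 q.2), ?_, ?_⟩
      · exact le_max_left p.2 q.2
      · exact le_max_right p.2 q.2
    set xnet : ↥A × ℕ → X := fun p => ((p.2 : ℝ) + 1)⁻¹ • ((p.1 : X) - a₀) with hxnet
    set w : obDual ↥(obDual X) := t - b with hw
    have hwpos : ∀ h : obDual X, 0 ≤ h → 0 ≤ (w : ↥(obDual X) →ₗ[ℝ] ℝ) h := by
      intro h hh
      have h1 := subPre_le_iff.mp (hbt a₀ ha₀).1 h hh
      have h2 := subPre_le_iff.mp (hbt a₀ ha₀).2 h hh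
      simp only [hw, AddSubgroupClass.coe_sub, LinearMap.sub_apply]
      linarith
    have hdiff : ∀ a ∈ A, ∀ h : obDual X, 0 ≤ h →
        |(h : X →ₗ[ℝ] ℝ) a - (h : X →ₗ[ℝ] ℝ) a₀| ≤ (w : ↥(obDual X) →ₗ[ℝ] ℝ) h := by
      intro a ha h hh
      have h1 := subPre_le_iff.mp (hbt a ha).1 h hh
      have h2 := subPre_le_iff.mp (hbt a ha).2 h hh
      have h3 := subPre_le_iff.mp (hbt a₀ ha₀).1 h hh
      have h4 := subPre_le_iff.mp (hbt a₀ ha₀).2 h hh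
      rw [hatEl_apply] at h1 h2 h3 h4
      simp only [hw, AddSubgroupClass.coe_sub, LinearMap.sub_apply]
      rw [abs_le]
      constructor <;> linarith
    have hOC : @OConvTo _ _ _ (↥A × ℕ) pre (fun α => hatEl X (obDual X) (xnet α)) 0 := by
      have coefle : ∀ {n m : ℕ}, n ≤ m → ((m : ℝ) + 1)⁻¹ ≤ ((n : ℝ) + 1)⁻¹ := by
        intro n m hnm
        apply inv_anti₀ (by positivity)
        have : (n : ℝ) ≤ (m : ℝ) := by exact_mod_cast hnm
        linarith
      have hDle : ∀ {n m : ℕ}, n ≤ m →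
          (((m : ℕ) : ℝ) + 1)⁻¹ • w ≤ (((n : ℕ) : ℝ) + 1)⁻¹ • w := by
        intro n m hnm
        refine subPre_le_iff.mpr ?_
        intro h hh
        simp only [SetLike.val_smul, LinearMap.smul_apply, smul_eq_mul]
        have hwh := hwpos h hh
        have := coefle hnm
        nlinarith
      refine ⟨Set.range (fun n : ℕ => ((n : ℝ) + 1)⁻¹ • w), ⟨_, ⟨0, rfl⟩⟩, ?_, ?_, ?_⟩
      · rintro _ ⟨n, rfl⟩ _ ⟨m, rfl⟩
        exact ⟨(((max n m : ℕ) : ℝ) + 1)⁻¹ • w, ⟨max n m, rfl⟩,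
          hDle (le_max_left n m), hDle (le_max_right n m)⟩
      · constructor
        · rintro _ ⟨n, rfl⟩
          refine subPre_le_iff.mpr ?_
          intro h hh
          have := hwpos h hh
          simp only [ZeroMemClass.coe_zero, LinearMap.zero_apply, SetLike.val_smul,
            LinearMap.smul_apply, smul_eq_mul]
          positivity
        · intro c hc
          refine subPre_le_iff.mpr ?_
          intro h hh
          simp only [ZeroMemClass.coe_zero, LinearMap.zero_apply]
          by_contra hpos
          push_neg at hpos
          obtain ⟨n, hn⟩ := exists_nat_gt ((w : ↥(obDual X) →ₗ[ℝ] ℝ) h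
            / (c : ↥(obDual X) →ₗ[ℝ] ℝ) h)
          have hcn := subPre_le_iff.mp (hc ⟨n, rfl⟩) h hh
          simp only [SetLike.val_smul, LinearMap.smul_apply, smul_eq_mul] at hcn
          have hd1 : (w : ↥(obDual X) →ₗ[ℝ] ℝ) h
              < ((n : ℝ) + 1) * (c : ↥(obDual X) →ₗ[ℝ] ℝ) h := by
            rw [div_lt_iff₀ hpos] at hn
            have hch := hpos.le
            nlinarith [hwpos h hh]
          have hp2 : (0:ℝ) < ((n : ℝ) + 1) := by positivity
          have := mul_lt_mul_of_pos_left hd1 (inv_pos.mpr hp2)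
          rw [← mul_assoc, inv_mul_cancel₀ hp2.ne', one_mul] at this
          linarith
      · rintro _ ⟨k, rfl⟩
        refine ⟨(⟨a₀, ha₀⟩, k), ?_⟩
        rintro ⟨a, m⟩ hkm
        have hkm' : k ≤ m := hkm
        have hcm : ((m : ℝ) + 1)⁻¹ ≤ ((k : ℝ) + 1)⁻¹ := coefle hkm'
        have hval : ∀ h : obDual X, (h : X →ₗ[ℝ] ℝ) (xnet (a, m))
            = ((m : ℝ) + 1)⁻¹ * ((h : X →ₗ[ℝ] ℝ) (a : X) - (h : X →ₗ[ℝ] ℝ) a₀) := by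
          intro h
          show (h : X →ₗ[ℝ] ℝ) (((m : ℝ) + 1)⁻¹ • ((a : X) - a₀)) = _
          rw [map_smul, map_sub]
          simp
        have hd := fun (h : obDual X) (hh : 0 ≤ h) => abs_le.mp (hdiff (a : X) a.2 h hh)
        have hm1 : (0:ℝ) < ((m : ℝ) + 1) := by positivity
        have hminv : (0:ℝ) ≤ ((m : ℝ) + 1)⁻¹ := (inv_pos.mpr hm1).le
        constructor
        · rw [bid_zero_sub]
          refine subPre_neg_le_iff.mpr ?_
          intro h hh
          simp only [SetLike.val_smul, LinearMap.smul_apply, smul_eq_mul, hatEl_apply]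
          rw [hval h]
          have hwh := hwpos h hh
          have e1 := mul_le_mul_of_nonneg_left (hd h hh).1 hminv
          have e2 := mul_le_mul_of_nonneg_right hcm hwh
          nlinarith
        · rw [bid_zero_add]
          refine subPre_le_iff.mpr ?_
          intro h hh
          simp only [SetLike.val_smul, LinearMap.smul_apply, smul_eq_mul, hatEl_apply]
          rw [hval h]
          have hwh := hwpos h hh
          have e1 := mul_le_mul_of_nonneg_left (hd h hh).2 hminv
          have e2 := mul_le_mul_of_nonneg_right hcm hwh
          nlinarith
    have := @hconv (↥A × ℕ) pre hne hdir xnet hOC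
    obtain ⟨D₂, ⟨d₂, hd₂⟩, _, _, hsand₂⟩ := this
    obtain ⟨⟨a₁, n₁⟩, hα₀⟩ := hsand₂ d₂ hd₂
    refine ⟨a₀ - ((n₁ : ℝ) + 1) • d₂, a₀ + ((n₁ : ℝ) + 1) • d₂, ?_⟩
    intro a ha
    have hmem := hα₀ (⟨a, ha⟩, n₁) (le_rfl : n₁ ≤ n₁)
    obtain ⟨hl, hr⟩ := hmem
    rw [zero_sub] at hl
    rw [zero_add] at hr
    have hpos : (0:ℝ) < (n₁ : ℝ) + 1 := by positivity
    have hxval : xnet (⟨a, ha⟩, n₁) = ((n₁ : ℝ) + 1)⁻¹ • (a - a₀) := rfl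
    have h1 : ((n₁ : ℝ) + 1) • xnet (⟨a, ha⟩, n₁) = a - a₀ := by
      rw [hxval, smul_smul, mul_inv_cancel₀ hpos.ne', one_smul]
    constructor
    · have := smul_le_smul_of_nonneg_left hl (le_of_lt hpos)
      rw [h1, smul_neg] at this
      have h2 : a₀ - ((n₁ : ℝ) + 1) • d₂ ≤ a₀ + (a - a₀) := by
        have h3 : a₀ + -(((n₁ : ℝ) + 1) • d₂) ≤ a₀ + (a - a₀) :=
          add_le_add_right this a₀
        simpa [sub_eq_add_neg] using h3
      simpa using h2
    · have := smul_le_smul_of_nonneg_left hr (le_of_lt hpos)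
      rw [h1] at this
      have h2 : a₀ + (a - a₀) ≤ a₀ + ((n₁ : ℝ) + 1) • d₂ := add_le_add_right this a₀
      simpa using h2
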